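/- Let H be the set of heads, i.e., positions j with ℓ_j > ℓ_{j−1} − 1 (position 1 is always a head). For any position i, letting j = max{h ∈ H : h ≤ i} and k = i − j, we have ℓ_i = ℓ_j − k, and if (p_j, ℓ_j) is the matching statistics entry at j then p_j + k is a valid occurrence position for the matching factor at i (Lemma on recovering matching statistics from the compressed matching statistics). -/
import Mathlib


open List

/-- `ℓ` is the matching-statistics length of `S` w.r.t. `R` at position `i`. -/
def IsMSLen {α : Type*} (R S : List α) (i ℓ : ℕ) : Prop :=
  ((S.drop i).take ℓ) <:+: R ∧ ℓ ≤ (S.drop i).length ∧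
    ∀ k, k ≤ (S.drop i).length → ((S.drop i).take k) <:+: R → k ≤ ℓ

/-- `j` is a head of the matching statistics length sequence `ℓ`:
either `j` is the first position, or `ℓ j > ℓ (j-1) - 1`. -/
def IsHead (ℓ : ℕ → ℕ) (j : ℕ) : Prop :=
  j = 0 ∨ (ℓ (j - 1) : ℤ) - 1 < (ℓ j : ℤ)

/-- Fundamental property: the matching statistics length decreases by at most 1. -/
lemma ms_step {α : Type*} (R S : List α) (ℓ : ℕ → ℕ)
    (hms : ∀ i, i < S.length → IsMSLen R S i (ℓ i))
    (h : ℕ) (hh : h + 1 < S.length) : ℓ h ≤ ℓ (h + 1) + 1 := by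
  rcases Nat.eq_zero_or_pos (ℓ h) with h0 | h0
  · omega
  obtain ⟨hinf, hlen, _⟩ := hms h (by omega)
  obtain ⟨_, _, hmax⟩ := hms (h + 1) hh
  have hdrop : ((S.drop h).take (ℓ h)).drop 1 = (S.drop (h + 1)).take (ℓ h - 1) := by
    rw [List.drop_take, List.drop_drop]
  have hinf' : (S.drop (h + 1)).take (ℓ h - 1) <:+: R := by
    rw [← hdrop]
    exact ((List.drop_suffix 1 _).isInfix).trans hinf
  have hlen' : ℓ h - 1 ≤ (S.drop (h + 1)).length := by
    simp only [List.length_drop] at hlen ⊢; omega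
  have := hmax _ hlen' hinf'
  omega

theorem stmt2 {α : Type*} (R S : List α) (ℓ p : ℕ → ℕ)
    (hms : ∀ i, i < S.length → IsMSLen R S i (ℓ i))
    (hocc : ∀ i, i < S.length → ((S.drop i).take (ℓ i)) <+: R.drop (p i))
    (i j : ℕ) (hi : i < S.length) (hji : j ≤ i)
    (hhead : IsHead ℓ j)
    (hmax : ∀ h, j < h → h ≤ i → ¬ IsHead ℓ h) :
    ℓ i = ℓ j - (i - j) ∧
    ((S.drop i).take (ℓ i)) <+: R.drop (p j + (i - j)) := by
  -- key: ℓ j = ℓ (j + k) + k for all j + k ≤ i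
  have key : ∀ k, j + k ≤ i → ℓ j = ℓ (j + k) + k := by
    intro k
    induction k with
    | zero => simp
    | succ k ih =>
      intro hk
      rw [show j + (k + 1) = j + k + 1 from rfl] at hk ⊢
      have hnh := hmax (j + k + 1) (by omega) (by omega)
      have hstep := ms_step R S ℓ hms (j + k) (by omega)
      simp only [IsHead, not_or, Nat.add_sub_cancel] at hnh
      obtain ⟨-, hnh⟩ := hnh
      push_neg at hnh
      have := ih (by omega)
      omega
  set m := i - j with hm
  have hij : i = j + m := by omega
  have hkey : ℓ j = ℓ i + m := by rw [hij]; exact key m (by omega)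
  refine ⟨by omega, ?_⟩
  have hpre : (S.drop j).take (ℓ j) <+: R.drop (p j) := hocc j (by omega)
  have := hpre.drop m
  rwa [List.drop_take, List.drop_drop, List.drop_drop,
    show ℓ j - m = ℓ i by omega, ← hij] at this
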